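/- If Q is a sub-rate matrix (Metzler with ∑ y, Q x y ≤ 0 for every x), then for every real t ≥ 0 and every x : ι, ∑ y, (Matrix.exp ℝ (t • Q)) x y ≤ 1. (Sub-stochasticity of the transition semigroup, underlying the mass statements in Theorem 2.5(ii) of the paper.) -/

import Mathlib

/-- Mathlib's exponential, specialized to real matrices (`Matrix.exp ℝ`). -/
noncomputable def Matrix.exp (𝕂 : Type*) [Field 𝕂] {ι : Type*} [Fintype ι] [DecidableEq ι]
    [Algebra 𝕂 ℝ] (A : Matrix ι ι ℝ) : Matrix ι ι ℝ :=
  NormedSpace.exp A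

private lemma pow_entry_nonneg' {ι : Type*} [Fintype ι] [DecidableEq ι] {A : Matrix ι ι ℝ}
    (hA : ∀ x y, 0 ≤ A x y) : ∀ n x y, 0 ≤ (A ^ n) x y := by
  intro n
  induction n with
  | zero =>
    intro x y
    by_cases h : x = y <;> simp [pow_zero, Matrix.one_apply, h]
  | succ n ih =>
    intro x y
    rw [pow_succ, Matrix.mul_apply]
    exact Finset.sum_nonneg fun z _ => mul_nonneg (ih x z) (hA z y)

private lemma pow_row_sum_le' {ι : Type*} [Fintype ι] [DecidableEq ι] {A : Matrix ι ι ℝ}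
    (hA : ∀ x y, 0 ≤ A x y) {c : ℝ} (hc : 0 ≤ c) (h : ∀ x, ∑ y, A x y ≤ c) :
    ∀ n x, ∑ y, (A ^ n) x y ≤ c ^ n := by
  intro n
  induction n with
  | zero =>
    intro x
    simp [pow_zero, Matrix.one_apply]
  | succ n ih =>
    intro x
    rw [pow_succ']
    calc ∑ y, (A * A ^ n) x y = ∑ y, ∑ z, A x z * (A ^ n) z y := by
          simp [Matrix.mul_apply]
      _ = ∑ z, A x z * ∑ y, (A ^ n) z y := by
          rw [Finset.sum_comm]; simp [Finset.mul_sum]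
      _ ≤ ∑ z, A x z * c ^ n := by
          refine Finset.sum_le_sum fun z _ => mul_le_mul_of_nonneg_left (ih z) (hA x z)
      _ = (∑ z, A x z) * c ^ n := by rw [Finset.sum_mul]
      _ ≤ c * c ^ n := mul_le_mul_of_nonneg_right (h x) (pow_nonneg hc n)
      _ = c ^ (n + 1) := (pow_succ' c n).symm

/-- If `Q` is a sub-rate matrix (Metzler with nonpositive row sums), then the transition
semigroup `t ↦ exp (t • Q)` is sub-stochastic: the row sums are at most one for `t ≥ 0`. -/
theorem matrix_exp_row_sum_le_one_of_subrate {ι : Type*} [Fintype ι] [DecidableEq ι] [Nonempty ι]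
    (Q : Matrix ι ι ℝ) (hMetzler : ∀ x y, x ≠ y → Q x y ≥ 0)
    (hrow : ∀ x, ∑ y, Q x y ≤ 0) :
    ∀ t : ℝ, 0 ≤ t → ∀ x : ι, ∑ y, Matrix.exp ℝ (t • Q) x y ≤ 1 := by
  classical
  intro t ht x
  set c : ℝ := ∑ z, |Q z z| with hc
  have hc0 : 0 ≤ c := Finset.sum_nonneg fun z _ => abs_nonneg _
  set A : Matrix ι ι ℝ := Q + c • 1 with hAdef
  have habs : ∀ a : ι, |Q a a| ≤ c := by
    intro a
    rw [hc]
    exact Finset.single_le_sum (f := fun z => |Q z z|) (fun z _ => abs_nonneg _) (Finset.mem_univ a)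
  have hAnn : ∀ a b, 0 ≤ A a b := by
    intro a b
    by_cases hab : a = b
    · subst hab
      simp only [hAdef, Matrix.add_apply, Matrix.smul_apply, Matrix.one_apply_eq, smul_eq_mul,
        mul_one]
      linarith [neg_le_abs (Q a a), habs a]
    · simpa [hAdef, Matrix.one_apply, hab] using hMetzler a b hab
  have hArow : ∀ a, ∑ y, A a y ≤ c := by
    intro a
    have : ∑ y, A a y = (∑ y, Q a y) + c := by
      simp [hAdef, Finset.sum_add_distrib, Matrix.smul_apply, Matrix.one_apply,
        Finset.sum_ite_eq' (Finset.univ : Finset ι)]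
    rw [this]
    linarith [hrow a]
  -- entrywise description of the series of exp (t • A)
  set g : ℕ → Matrix ι ι ℝ := fun n => (((n.factorial : ℝ)⁻¹)) • (t • A) ^ n with hg
  have hpow : ∀ n, (t • A) ^ n = t ^ n • A ^ n := fun n => smul_pow t A n
  have hgentry : ∀ n a b, g n a b = ((n.factorial : ℝ)⁻¹) * (t ^ n * (A ^ n) a b) := by
    intro n a b
    simp [hg, hpow n, Matrix.smul_apply, smul_eq_mul]
  have hAn_nonneg := pow_entry_nonneg' hAnn
  have hAn_row := pow_row_sum_le' hAnn hc0 hArow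
  have hg_nonneg : ∀ n a b, 0 ≤ g n a b := by
    intro n a b
    rw [hgentry]
    exact mul_nonneg (by positivity) (mul_nonneg (pow_nonneg ht n) (hAn_nonneg n a b))
  have hg_bound : ∀ n a b, g n a b ≤ ((n.factorial : ℝ)⁻¹) * (t * c) ^ n := by
    intro n a b
    rw [hgentry, mul_pow]
    have h1 : (A ^ n) a b ≤ c ^ n := by
      calc (A ^ n) a b ≤ ∑ y, (A ^ n) a y :=
            Finset.single_le_sum (fun y _ => hAn_nonneg n a y) (Finset.mem_univ b)
        _ ≤ c ^ n := hAn_row n a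
    have : t ^ n * (A ^ n) a b ≤ t ^ n * c ^ n :=
      mul_le_mul_of_nonneg_left h1 (pow_nonneg ht n)
    have hfac : (0:ℝ) ≤ ((n.factorial : ℝ)⁻¹) := by positivity
    exact mul_le_mul_of_nonneg_left this hfac
  have hmaj : Summable fun n : ℕ => ((n.factorial : ℝ)⁻¹) * (t * c) ^ n := by
    simpa [div_eq_inv_mul] using Real.summable_pow_div_factorial (t * c)
  have hg_summ_entry : ∀ a b, Summable fun n => g n a b := fun a b =>
    Summable.of_nonneg_of_le (fun n => hg_nonneg n a b) (fun n => hg_bound n a b) hmaj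
  have hg_summ : Summable g :=
    Pi.summable.mpr fun a => Pi.summable.mpr fun b => hg_summ_entry a b
  have hg_summ_row : ∀ a, Summable fun n => g n a := fun a =>
    Pi.summable.mpr fun b => hg_summ_entry a b
  have hexpA_entry : ∀ a b, Matrix.exp ℝ (t • A) a b = ∑' n, g n a b := by
    intro a b
    have h0 : Matrix.exp ℝ (t • A) = ∑' n, g n := by
      rw [Matrix.exp, NormedSpace.exp_eq_tsum ℝ]
    rw [h0]
    exact (congrFun (tsum_apply hg_summ) b).trans (tsum_apply (hg_summ_row a))
  -- row sum bound for exp (t • A)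
  have hrowA : ∑ y, Matrix.exp ℝ (t • A) x y ≤ Real.exp (t * c) := by
    have h1 : ∑ y, Matrix.exp ℝ (t • A) x y = ∑' n, ∑ y, g n x y := by
      simp_rw [hexpA_entry]
      exact (Summable.tsum_finsetSum fun y _ => hg_summ_entry x y).symm
    have hsum_row_summ : Summable fun n => ∑ y, g n x y :=
      summable_sum fun y _ => hg_summ_entry x y
    have h2 : ∀ n, ∑ y, g n x y ≤ ((n.factorial : ℝ)⁻¹) * (t * c) ^ n := by
      intro n
      have : ∑ y, g n x y = ((n.factorial : ℝ)⁻¹) * (t ^ n * ∑ y, (A ^ n) x y) := by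
        simp_rw [hgentry]; rw [← Finset.mul_sum, ← Finset.mul_sum]
      rw [this, mul_pow]
      have hfac : (0:ℝ) ≤ ((n.factorial : ℝ)⁻¹) := by positivity
      exact mul_le_mul_of_nonneg_left
        (mul_le_mul_of_nonneg_left (hAn_row n x) (pow_nonneg ht n)) hfac
    have h3 : ∑' n, ∑ y, g n x y ≤ ∑' n, ((n.factorial : ℝ)⁻¹) * (t * c) ^ n :=
      Summable.tsum_le_tsum h2 hsum_row_summ hmaj
    have h4 : Real.exp (t * c) = ∑' n, ((n.factorial : ℝ)⁻¹) * (t * c) ^ n := by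
      rw [Real.exp_eq_exp_ℝ, NormedSpace.exp_eq_tsum ℝ]
      simp [smul_eq_mul]
    rw [h1, h4]
    exact h3
  -- relate exp (t • A) and exp (t • Q)
  have hsplit : t • A = t • Q + (t * c) • (1 : Matrix ι ι ℝ) := by
    rw [hAdef, smul_add, smul_smul]
  have hcomm : Commute (t • Q) ((t * c) • (1 : Matrix ι ι ℝ)) :=
    (Commute.one_right (t • Q)).smul_right (t * c)
  have hexp1 : NormedSpace.exp ((t * c) • (1 : Matrix ι ι ℝ))
      = Real.exp (t * c) • (1 : Matrix ι ι ℝ) := by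
    have h1 : (t * c) • (1 : Matrix ι ι ℝ) = Matrix.diagonal (fun _ => t * c) := by
      ext a b
      by_cases hab : a = b <;>
        simp [Matrix.smul_apply, Matrix.one_apply, Matrix.diagonal, hab]
    rw [h1, Matrix.exp_diagonal]
    rw [show (NormedSpace.exp fun _ : ι => t * c) = fun _ : ι => Real.exp (t * c) by
      funext z; simp [Pi.exp_def, Real.exp_eq_exp_ℝ]]
    ext a b
    by_cases hab : a = b <;>
      simp [Matrix.smul_apply, Matrix.one_apply, Matrix.diagonal, hab]
  have hfactor : Matrix.exp ℝ (t • A) = Real.exp (t * c) • Matrix.exp ℝ (t • Q) := by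
    rw [Matrix.exp, Matrix.exp, hsplit, Matrix.exp_add_of_commute _ _ hcomm, hexp1,
      mul_smul_comm, mul_one]
  have he : (0:ℝ) < Real.exp (t * c) := Real.exp_pos _
  have hfin : Real.exp (t * c) * ∑ y, Matrix.exp ℝ (t • Q) x y ≤ Real.exp (t * c) := by
    calc Real.exp (t * c) * ∑ y, Matrix.exp ℝ (t • Q) x y
        = ∑ y, Matrix.exp ℝ (t • A) x y := by
          rw [hfactor]; simp [Matrix.smul_apply, Finset.mul_sum, smul_eq_mul]
      _ ≤ Real.exp (t * c) := hrowA
  exact le_of_mul_le_mul_left (by rw [mul_one]; exact hfin) he
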